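/- arXiv:1207.1855 — 7 statements merged into one kernel-verified Lean document; each statement's English description precedes it below -/
import Mathlib

section
/- Let x* ∈ ℝⁿ with support N = {j : x*_j ≠ 0}, let T ⊆ {1,...,n}, Tᶜ = {1,...,n}\T, and Δ = N\T. Let δ ∈ ℝⁿ and I ⊆ Δ be such that δ_k x*_k > 0 for all k ∈ I and δ_k x*_k ≤ 0 for all k ∈ Δ\I. Then for all t < 0 with |t| sufficiently small, ‖(x* + tδ)_{Tᶜ}‖₁ = ‖x*_{Tᶜ}‖₁ + |t|·(∑_{k ∈ Tᶜ\I} |δ_k| − ∑_{k ∈ I} |δ_k|), where v_{Tᶜ} denotes the restriction of v to indices in Tᶜ. -/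
lemma abs_add_of_mul_nonneg (x y : ℝ) (h : 0 ≤ x * y) : |x + y| = |x| + |y| := by
  rcases le_or_gt 0 x with hx | hx <;> rcases le_or_gt 0 y with hy | hy
  · rw [abs_of_nonneg hx, abs_of_nonneg hy, abs_of_nonneg (by linarith)]
  · have hx0 : x = 0 := by nlinarith
    simp [hx0]
  · have hy0 : y = 0 := by nlinarith
    simp [hy0]
  · rw [abs_of_nonpos hx.le, abs_of_nonpos hy.le, abs_of_nonpos (by linarith)]
    ring

lemma key_pos (x d t : ℝ) (hx : x ≠ 0) (hd : d * x > 0) (ht : t < 0)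
    (hs : |t| < |x| / |d|) : |x + t * d| = |x| - |t| * |d| := by
  have hd0 : d ≠ 0 := fun h => by simp [h] at hd
  have hdp : 0 < |d| := abs_pos.mpr hd0
  have hs' : |t| * |d| < |x| := (lt_div_iff₀ hdp).mp hs
  rcases lt_or_gt_of_ne hx with hxn | hxp
  · -- x < 0, so d < 0, t*d > 0
    have hdneg : d < 0 := by nlinarith
    have htd : 0 < t * d := mul_pos_of_neg_of_neg ht hdneg
    rw [abs_of_neg hxn, abs_of_neg ht, abs_of_neg hdneg] at *
    have : t * d = (-t) * (-d) := by ring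
    rw [abs_of_neg (by nlinarith : x + t * d < 0)]
    nlinarith
  · have hdpos : 0 < d := by nlinarith
    have htd : t * d < 0 := mul_neg_of_neg_of_pos ht hdpos
    rw [abs_of_pos hxp, abs_of_neg ht, abs_of_pos hdpos] at *
    rw [abs_of_pos (by nlinarith : 0 < x + t * d)]
    nlinarith

/-- ℓ¹-norm expansion on Tᶜ for x* + tδ, t < 0 with |t| sufficiently small. -/
theorem stmt_1 {n : ℕ} (xstar δ : Fin n → ℝ) (T I : Finset (Fin n))
    (hI : ∀ k ∈ I, xstar k ≠ 0 ∧ k ∉ T)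
    (hpos : ∀ k ∈ I, δ k * xstar k > 0)
    (hneg : ∀ k, xstar k ≠ 0 → k ∉ T → k ∉ I → δ k * xstar k ≤ 0)
    (t : ℝ) (ht : t < 0)
    (hsmall : ∀ k, xstar k ≠ 0 → δ k ≠ 0 → |t| < |xstar k| / |δ k|) :
    ∑ k ∈ Tᶜ, |xstar k + t * δ k|
      = ∑ k ∈ Tᶜ, |xstar k| + |t| * (∑ k ∈ Tᶜ \ I, |δ k| - ∑ k ∈ I, |δ k|) := by
  have hIsub : I ⊆ Tᶜ := fun k hk => Finset.mem_compl.mpr (hI k hk).2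
  have h1 : ∑ k ∈ Tᶜ \ I, |xstar k + t * δ k|
      = ∑ k ∈ Tᶜ \ I, (|xstar k| + |t| * |δ k|) := by
    refine Finset.sum_congr rfl fun k hk => ?_
    obtain ⟨hkc, hkI⟩ := Finset.mem_sdiff.mp hk
    have hkT : k ∉ T := Finset.mem_compl.mp hkc
    have hmul : 0 ≤ xstar k * (t * δ k) := by
      rcases eq_or_ne (xstar k) 0 with h0 | h0
      · simp [h0]
      · have := hneg k h0 hkT hkI
        nlinarith
    rw [abs_add_of_mul_nonneg _ _ hmul, abs_mul]
  have h2 : ∑ k ∈ I, |xstar k + t * δ k|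
      = ∑ k ∈ I, (|xstar k| - |t| * |δ k|) := by
    refine Finset.sum_congr rfl fun k hk => ?_
    have hx := (hI k hk).1
    have hd := hpos k hk
    have hd0 : δ k ≠ 0 := fun h => by simp [h] at hd
    exact key_pos _ _ _ hx hd ht (hsmall k hx hd0)
  rw [← Finset.sum_sdiff hIsub, ← Finset.sum_sdiff (f := fun k => |xstar k|) hIsub,
    h1, h2, Finset.sum_add_distrib, Finset.sum_sub_distrib, ← Finset.mul_sum,
    ← Finset.mul_sum]
  ring
end

section
/- Let x* ∈ ℝⁿ with support N, T ⊆ {1,...,n}, Δ = N\T, and let x† ∈ ℝⁿ be arbitrary. Define δ = (x* − x†)/‖x* − x†‖₁ (assuming x† ≠ x*), t* = −‖x* − x†‖₁, and I = {k ∈ Δ : sign(x*_k) = sign(δ_k)}. Then ‖x†_{Tᶜ}‖₁ ≥ ‖x*_{Tᶜ}‖₁ + |t*|·(∑_{k ∈ Tᶜ\I} |δ_k| − ∑_{k ∈ I} |δ_k|). -/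
lemma sign_div_pos (x S : ℝ) (hS : 0 < S) : Real.sign (x / S) = Real.sign x := by
  rcases lt_trichotomy x 0 with h | h | h
  · rw [Real.sign_of_neg h, Real.sign_of_neg (div_neg_of_neg_of_pos h hS)]
  · simp [h]
  · rw [Real.sign_of_pos h, Real.sign_of_pos (div_pos h hS)]

lemma absA (a b : ℝ) (h : a = 0 ∨ Real.sign a ≠ Real.sign (a - b)) :
    |a| + |a - b| ≤ |b| := by
  rcases h with h | h
  · subst h; simp
  rcases lt_trichotomy a 0 with ha | ha | ha
  · rcases lt_trichotomy (a - b) 0 with hab | hab | hab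
    · exact absurd (by rw [Real.sign_of_neg ha, Real.sign_of_neg hab]) h
    · have hb : b = a := by linarith
      subst hb; simp
    · rw [abs_of_neg ha, abs_of_pos hab, abs_of_neg (by linarith : b < 0)]; linarith
  · simp [ha]
  · rcases lt_trichotomy (a - b) 0 with hab | hab | hab
    · rw [abs_of_pos ha, abs_of_neg hab, abs_of_pos (by linarith : 0 < b)]; linarith
    · have hb : b = a := by linarith
      subst hb; simp
    · exact absurd (by rw [Real.sign_of_pos ha, Real.sign_of_pos hab]) h

/-- lower bound on ‖x†_{Tᶜ}‖₁ in terms of the normalized direction δ. -/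
theorem stmt_2 {n : ℕ} (xstar xdag : Fin n → ℝ) (hne : xdag ≠ xstar)
    (T I : Finset (Fin n)) (δ : Fin n → ℝ)
    (hδ : δ = fun k => (xstar k - xdag k) / (∑ j, |xstar j - xdag j|))
    (tstar : ℝ) (htstar : tstar = -(∑ j, |xstar j - xdag j|))
    (hI : ∀ k, k ∈ I ↔ (xstar k ≠ 0 ∧ k ∉ T ∧ Real.sign (xstar k) = Real.sign (δ k))) :
    ∑ k ∈ Tᶜ, |xdag k|
      ≥ ∑ k ∈ Tᶜ, |xstar k| + |tstar| * (∑ k ∈ Tᶜ \ I, |δ k| - ∑ k ∈ I, |δ k|) := by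
  set S := ∑ j, |xstar j - xdag j| with hS
  have hS0 : 0 < S := by
    obtain ⟨j, hj⟩ : ∃ j, xstar j ≠ xdag j := by
      by_contra h; push_neg at h; exact hne (funext fun j => (h j).symm)
    calc (0:ℝ) < |xstar j - xdag j| := abs_pos.mpr (sub_ne_zero.mpr hj)
    _ ≤ S := by rw [hS]; exact Finset.single_le_sum (f := fun i => |xstar i - xdag i|) (fun i _ => abs_nonneg _) (Finset.mem_univ j)
  have ht : |tstar| = S := by rw [htstar, abs_neg, abs_of_pos hS0]
  have hd : ∀ k, |tstar| * |δ k| = |xstar k - xdag k| := by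
    intro k
    rw [ht, hδ]
    simp only
    rw [abs_div, abs_of_pos hS0]
    field_simp
  have hsub : I ⊆ Tᶜ := fun k hk => Finset.mem_compl.mpr ((hI k).mp hk).2.1
  have hsplit : ∀ f : Fin n → ℝ, ∑ k ∈ Tᶜ \ I, f k + ∑ k ∈ I, f k = ∑ k ∈ Tᶜ, f k :=
    fun f => Finset.sum_sdiff hsub
  rw [ge_iff_le, ← hsplit (fun k => |xdag k|), ← hsplit (fun k => |xstar k|),
    mul_sub, Finset.mul_sum, Finset.mul_sum]
  simp only [hd]
  have h1 : ∑ k ∈ Tᶜ \ I, |xstar k| + ∑ k ∈ Tᶜ \ I, |xstar k - xdag k|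
      ≤ ∑ k ∈ Tᶜ \ I, |xdag k| := by
    rw [← Finset.sum_add_distrib]
    apply Finset.sum_le_sum
    intro k hk
    obtain ⟨hkc, hkI⟩ := Finset.mem_sdiff.mp hk
    apply absA
    by_cases hz : xstar k = 0
    · exact Or.inl hz
    · right
      intro hsign
      apply hkI
      rw [hI]
      refine ⟨hz, Finset.mem_compl.mp hkc, ?_⟩
      rw [hδ]
      simp only
      rw [sign_div_pos _ _ hS0]
      exact hsign
  have h2 : ∑ k ∈ I, |xstar k| - ∑ k ∈ I, |xstar k - xdag k| ≤ ∑ k ∈ I, |xdag k| := by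
    rw [sub_le_iff_le_add, ← Finset.sum_add_distrib]
    apply Finset.sum_le_sum
    intro k _
    have := abs_sub_abs_le_abs_sub (xstar k) (xdag k)
    linarith
  linarith
end

section
/- Let A ∈ ℝ^{m×n}, x* ∈ ℝⁿ with support N, T ⊆ {1,...,n}, Δ = N\T, and y = A x*. Suppose x* is the unique minimizer of ‖x_{Tᶜ}‖₁ subject to Ax = y. Then for every subset I ⊆ Δ and every δ ∈ ℝⁿ satisfying Aδ = 0, ‖δ‖₁ = 1, δ_k x*_k > 0 for k ∈ I, and δ_k x*_k ≤ 0 for k ∈ Δ\I, one has ∑_{k ∈ Tᶜ\I} |δ_k| − ∑_{k ∈ I} |δ_k| > 0. -/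
lemma aux_same (a d ε : ℝ) (hε : 0 < ε) (h : d * a > 0) (hle : ε * |d| ≤ |a|) :
    |a - ε * d| = |a| - ε * |d| := by
  rcases lt_trichotomy a 0 with ha | ha | ha
  · have hd : d < 0 := by nlinarith
    rw [abs_of_neg ha, abs_of_neg hd] at hle
    rw [abs_of_neg ha, abs_of_neg hd, abs_of_nonpos (by nlinarith : a - ε * d ≤ 0)]
    ring
  · simp [ha] at h
  · have hd : 0 < d := by nlinarith
    rw [abs_of_pos ha, abs_of_pos hd] at hle
    rw [abs_of_pos ha, abs_of_pos hd, abs_of_nonneg (by nlinarith : 0 ≤ a - ε * d)]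

lemma aux_opp (a d ε : ℝ) (hε : 0 < ε) (h : d * a ≤ 0) :
    |a - ε * d| = |a| + ε * |d| := by
  rcases lt_trichotomy a 0 with ha | ha | ha
  · have hd : 0 ≤ d := by nlinarith
    rw [abs_of_neg ha, abs_of_nonneg hd]
    rw [abs_of_nonpos (by nlinarith)]
    ring
  · subst ha
    rw [abs_zero, zero_sub, abs_neg, abs_mul, abs_of_pos hε]
    ring
  · have hd : d ≤ 0 := by nlinarith
    rw [abs_of_pos ha, abs_of_nonpos hd]
    rw [abs_of_nonneg (by nlinarith)]
    ring

/-- necessity direction of Theorem 1. -/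
theorem stmt_3 {m n : ℕ} (A : Matrix (Fin m) (Fin n) ℝ) (xstar : Fin n → ℝ)
    (T : Finset (Fin n))
    (hmin : ∀ x : Fin n → ℝ, A.mulVec x = A.mulVec xstar → x ≠ xstar →
      ∑ k ∈ Tᶜ, |xstar k| < ∑ k ∈ Tᶜ, |x k|)
    (I : Finset (Fin n)) (hIsub : ∀ k ∈ I, xstar k ≠ 0 ∧ k ∉ T)
    (δ : Fin n → ℝ) (hδ0 : A.mulVec δ = 0) (hnorm : ∑ k, |δ k| = 1)
    (hpos : ∀ k ∈ I, δ k * xstar k > 0)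
    (hneg : ∀ k, xstar k ≠ 0 → k ∉ T → k ∉ I → δ k * xstar k ≤ 0) :
    ∑ k ∈ Tᶜ \ I, |δ k| - ∑ k ∈ I, |δ k| > 0 := by
  -- δ is nonzero
  have hδne : ∃ k, δ k ≠ 0 := by
    by_contra h
    push_neg at h
    simp [h] at hnorm
  obtain ⟨k0, hk0⟩ := hδne
  -- each |δ k| ≤ 1
  have hdle : ∀ k, |δ k| ≤ 1 := by
    intro k
    rw [← hnorm]
    exact Finset.single_le_sum (f := fun i => |δ i|) (fun i _ => abs_nonneg _) (Finset.mem_univ k)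
  -- choose small ε
  obtain ⟨ε, hε0, hεle⟩ : ∃ ε : ℝ, 0 < ε ∧ ∀ k ∈ I, ε ≤ |xstar k| := by
    by_cases hI : I.Nonempty
    · refine ⟨I.inf' hI (fun k => |xstar k|), ?_, ?_⟩
      · rw [Finset.lt_inf'_iff]
        intro k hk
        exact abs_pos.mpr (hIsub k hk).1
      · intro k hk
        exact Finset.inf'_le _ hk
    · exact ⟨1, one_pos, fun k hk => absurd ⟨k, hk⟩ hI⟩
  set x : Fin n → ℝ := fun k => xstar k - ε * δ k with hxdef
  have hAx : A.mulVec x = A.mulVec xstar := by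
    have hx : x = xstar - ε • δ := by
      funext k; simp [hxdef]
    rw [hx, Matrix.mulVec_sub, Matrix.mulVec_smul, hδ0, smul_zero, sub_zero]
  have hxne : x ≠ xstar := by
    intro h
    have := congrFun h k0
    simp [hxdef] at this
    rcases this with h1 | h1
    · exact absurd h1 (ne_of_gt hε0)
    · exact hk0 h1
  have hlt := hmin x hAx hxne
  have hIT : I ⊆ Tᶜ := fun k hk => Finset.mem_compl.mpr (hIsub k hk).2
  -- pointwise values on I
  have hI_val : ∀ k ∈ I, |x k| = |xstar k| - ε * |δ k| := by
    intro k hk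
    apply aux_same _ _ _ hε0 (hpos k hk)
    calc ε * |δ k| ≤ ε * 1 := by nlinarith [hdle k, abs_nonneg (δ k)]
    _ = ε := mul_one ε
    _ ≤ |xstar k| := hεle k hk
  -- pointwise values on Tᶜ \ I
  have hC_val : ∀ k ∈ Tᶜ \ I, |x k| = |xstar k| + ε * |δ k| := by
    intro k hk
    rw [Finset.mem_sdiff, Finset.mem_compl] at hk
    apply aux_opp _ _ _ hε0
    by_cases h0 : xstar k = 0
    · simp [h0]
    · exact hneg k h0 hk.1 hk.2
  have hsum : ∑ k ∈ Tᶜ, |x k| =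
      ∑ k ∈ Tᶜ, |xstar k| + ε * (∑ k ∈ Tᶜ \ I, |δ k| - ∑ k ∈ I, |δ k|) := by
    rw [← Finset.sum_sdiff hIT (f := fun k => |x k|),
        ← Finset.sum_sdiff hIT (f := fun k => |xstar k|),
        Finset.sum_congr rfl hC_val, Finset.sum_congr rfl hI_val,
        Finset.sum_add_distrib, Finset.sum_sub_distrib, ← Finset.mul_sum, ← Finset.mul_sum]
    ring
  rw [hsum] at hlt
  nlinarith
end

section
/- Let A ∈ ℝ^{m×n}, x* ∈ ℝⁿ with support N, T ⊆ {1,...,n}, Δ = N\T, and y = A x*. Suppose that for every subset I ⊆ Δ and every δ ∈ ℝⁿ with Aδ = 0, ‖δ‖₁ = 1, δ_k x*_k > 0 for k ∈ I, and δ_k x*_k ≤ 0 for k ∈ Δ\I, one has ∑_{k ∈ Tᶜ\I} |δ_k| − ∑_{k ∈ I} |δ_k| > 0. Then x* is the unique minimizer of ‖x_{Tᶜ}‖₁ subject to Ax = y; i.e., for every x† ≠ x* with A x† = y, ‖x†_{Tᶜ}‖₁ > ‖x*_{Tᶜ}‖₁. -/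
/-- sufficiency direction of Theorem 1. -/
theorem stmt_4 {m n : ℕ} (A : Matrix (Fin m) (Fin n) ℝ) (xstar : Fin n → ℝ)
    (T : Finset (Fin n))
    (hcond : ∀ (I : Finset (Fin n)), (∀ k ∈ I, xstar k ≠ 0 ∧ k ∉ T) →
      ∀ δ : Fin n → ℝ, A.mulVec δ = 0 → (∑ k, |δ k|) = 1 →
        (∀ k ∈ I, δ k * xstar k > 0) →
        (∀ k, xstar k ≠ 0 → k ∉ T → k ∉ I → δ k * xstar k ≤ 0) →
        ∑ k ∈ Tᶜ \ I, |δ k| - ∑ k ∈ I, |δ k| > 0) :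
    ∀ xdag : Fin n → ℝ, A.mulVec xdag = A.mulVec xstar → xdag ≠ xstar →
      ∑ k ∈ Tᶜ, |xstar k| < ∑ k ∈ Tᶜ, |xdag k| := by
  intro xdag hax hne
  set d : Fin n → ℝ := fun k => xdag k - xstar k with hd
  have hAd : A.mulVec d = 0 := by
    have : d = xdag - xstar := rfl
    rw [this, Matrix.mulVec_sub, hax, sub_self]
  have hdne : ∃ k, d k ≠ 0 := by
    by_contra h
    push_neg at h
    exact hne (funext fun k => by have := h k; simp [hd] at this; linarith)
  have hs : (0:ℝ) < ∑ k, |d k| := by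
    obtain ⟨k, hk⟩ := hdne
    exact Finset.sum_pos' (fun i _ => abs_nonneg _)
      ⟨k, Finset.mem_univ k, abs_pos.mpr hk⟩
  set s : ℝ := ∑ k, |d k| with hsdef
  set δ : Fin n → ℝ := fun k => -d k / s with hδ
  have habs : ∀ k, |δ k| = |d k| / s := by
    intro k
    rw [hδ]
    rw [abs_div, abs_neg, abs_of_pos hs]
  set I : Finset (Fin n) :=
    Finset.univ.filter (fun k => xstar k ≠ 0 ∧ k ∉ T ∧ d k * xstar k < 0) with hI
  have hImem : ∀ k ∈ I, xstar k ≠ 0 ∧ k ∉ T := by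
    intro k hk
    simp only [hI, Finset.mem_filter] at hk
    exact ⟨hk.2.1, hk.2.2.1⟩
  have hAδ : A.mulVec δ = 0 := by
    have : δ = (-(1/s)) • d := by
      funext k; simp [hδ]; ring
    rw [this, Matrix.mulVec_smul, hAd, smul_zero]
  have hnorm : (∑ k, |δ k|) = 1 := by
    simp only [habs]
    rw [← Finset.sum_div, ← hsdef, div_self (ne_of_gt hs)]
  have hpos : ∀ k ∈ I, δ k * xstar k > 0 := by
    intro k hk
    simp only [hI, Finset.mem_filter] at hk
    have h1 : d k * xstar k < 0 := hk.2.2.2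
    have : δ k * xstar k = -(d k * xstar k) / s := by rw [hδ]; ring
    rw [this]
    exact div_pos (by linarith) hs
  have hneg : ∀ k, xstar k ≠ 0 → k ∉ T → k ∉ I → δ k * xstar k ≤ 0 := by
    intro k hx hT hkI
    have h1 : ¬ (d k * xstar k < 0) := by
      intro h
      exact hkI (by simp [hI, hx, hT, h])
    push_neg at h1
    have : δ k * xstar k = -(d k * xstar k) / s := by rw [hδ]; ring
    rw [this]
    apply div_nonpos_of_nonpos_of_nonneg (by linarith) (le_of_lt hs)
  have key := hcond I hImem δ hAδ hnorm hpos hneg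
  -- turn key into a statement about d
  have keyd : ∑ k ∈ Tᶜ \ I, |d k| - ∑ k ∈ I, |d k| > 0 := by
    have h1 : ∑ k ∈ Tᶜ \ I, |δ k| = (∑ k ∈ Tᶜ \ I, |d k|) / s := by
      simp only [habs]; rw [Finset.sum_div]
    have h2 : ∑ k ∈ I, |δ k| = (∑ k ∈ I, |d k|) / s := by
      simp only [habs]; rw [Finset.sum_div]
    rw [h1, h2, div_sub_div_same] at key
    have := (div_pos_iff.mp key)
    rcases this with ⟨h, _⟩ | ⟨_, h⟩
    · linarith
    · linarith
  have hIsub : I ⊆ Tᶜ := by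
    intro k hk
    simp only [Finset.mem_compl]
    exact (hImem k hk).2
  -- pointwise bounds
  have hb1 : ∀ k ∈ Tᶜ \ I, |xstar k| + |d k| ≤ |xdag k| := by
    intro k hk
    simp only [Finset.mem_sdiff, Finset.mem_compl] at hk
    obtain ⟨hkT, hkI⟩ := hk
    have hxd : xdag k = xstar k + d k := by simp [hd]
    by_cases hx : xstar k = 0
    · rw [hxd, hx]; simp
    · have h1 : ¬ (d k * xstar k < 0) := by
        intro h
        exact hkI (by simp [hI, hx, hkT, h])
      push_neg at h1
      rcases lt_or_gt_of_ne hx with hxneg | hxpos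
      · have hdk : d k ≤ 0 := by nlinarith
        rw [hxd, abs_of_nonpos (le_of_lt hxneg), abs_of_nonpos hdk,
          abs_of_nonpos (by linarith : xstar k + d k ≤ 0)]
        linarith
      · have hdk : 0 ≤ d k := by nlinarith
        rw [hxd, abs_of_pos hxpos, abs_of_nonneg hdk,
          abs_of_nonneg (by linarith : (0:ℝ) ≤ xstar k + d k)]
  have hb2 : ∀ k ∈ I, |xstar k| - |d k| ≤ |xdag k| := by
    intro k _
    have hxd : xdag k = xstar k + d k := by simp [hd]
    rw [hxd]
    have := abs_sub_abs_le_abs_sub (xstar k) (-(d k))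
    simp at this
    calc |xstar k| - |d k| ≤ |xstar k + d k| := by
          have h := abs_add_le (xstar k + d k) (-(d k))
          simp at h
          have h2 : |xstar k| ≤ |xstar k + d k| + |d k| := by
            calc |xstar k| = |(xstar k + d k) + (-(d k))| := by ring_nf
              _ ≤ |xstar k + d k| + |(-(d k))| := abs_add_le _ _
              _ = |xstar k + d k| + |d k| := by rw [abs_neg]
          linarith
      _ = |xstar k + d k| := rfl
  -- combine
  have hsplit : ∀ f : Fin n → ℝ, ∑ k ∈ Tᶜ, f k = ∑ k ∈ Tᶜ \ I, f k + ∑ k ∈ I, f k :=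
    fun f => (Finset.sum_sdiff hIsub).symm
  have h1 : ∑ k ∈ Tᶜ \ I, (|xstar k| + |d k|) ≤ ∑ k ∈ Tᶜ \ I, |xdag k| :=
    Finset.sum_le_sum hb1
  have h2 : ∑ k ∈ I, (|xstar k| - |d k|) ≤ ∑ k ∈ I, |xdag k| :=
    Finset.sum_le_sum hb2
  rw [hsplit (fun k => |xstar k|), hsplit (fun k => |xdag k|)]
  rw [Finset.sum_add_distrib] at h1
  rw [Finset.sum_sub_distrib] at h2
  linarith
end

section
/- Let A ∈ ℝ^{m×n}, x* ∈ ℝⁿ, T ⊆ {1,...,n}, N = supp(x*), Δ = N\T, y = A x*. Then x* is the unique minimizer of ‖x_{Tᶜ}‖₁ subject to Ax = y if and only if for every I ⊆ Δ and every δ ∈ ℝⁿ satisfying Aδ = 0, ‖δ‖₁ = 1, δ_k x*_k > 0 for all k ∈ I, and δ_k x*_k ≤ 0 for all k ∈ Δ\I, it holds that ∑_{k ∈ Tᶜ\I} |δ_k| > ∑_{k ∈ I} |δ_k|. -/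
open Finset

/-- If `a*b ≥ 0` then `|a+b| = |a| + |b|`. -/
lemma abs_add_eq_of_nonneg_mul {a b : ℝ} (h : 0 ≤ a * b) : |a + b| = |a| + |b| := by
  rcases le_or_gt 0 a with ha | ha
  · rcases le_or_gt 0 b with hb | hb
    · rw [abs_of_nonneg ha, abs_of_nonneg hb, abs_of_nonneg (by linarith)]
    · have ha0 : a = 0 := by nlinarith
      simp [ha0]
  · rcases le_or_gt 0 b with hb | hb
    · have hb0 : b = 0 := by nlinarith
      simp [hb0]
    · rw [abs_of_neg ha, abs_of_neg hb, abs_of_neg (by linarith)]; ring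

/-- If `a*b > 0` and `t*|b| ≤ |a|` then `|a - t*b| ≤ |a| - t*|b|`. -/
lemma abs_sub_le_of_pos_mul {a b t : ℝ} (hab : 0 < a * b) (ht : t * |b| ≤ |a|) :
    |a - t * b| ≤ |a| - t * |b| := by
  rcases mul_pos_iff.mp hab with ⟨ha, hb⟩ | ⟨ha, hb⟩
  · rw [abs_of_pos ha, abs_of_pos hb] at ht ⊢
    rw [abs_of_nonneg (by linarith)]
  · rw [abs_of_neg ha, abs_of_neg hb] at ht ⊢
    rw [abs_of_nonpos (by linarith)]; linarith

/-- Theorem 1: sufficient and necessary condition for exact recovery. -/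
theorem stmt_5 {m n : ℕ} (A : Matrix (Fin m) (Fin n) ℝ) (xstar : Fin n → ℝ)
    (T : Finset (Fin n)) :
    (∀ x : Fin n → ℝ, A.mulVec x = A.mulVec xstar → x ≠ xstar →
        ∑ k ∈ Tᶜ, |xstar k| < ∑ k ∈ Tᶜ, |x k|)
    ↔ (∀ (I : Finset (Fin n)), (∀ k ∈ I, xstar k ≠ 0 ∧ k ∉ T) →
        ∀ δ : Fin n → ℝ, A.mulVec δ = 0 → (∑ k, |δ k|) = 1 →
          (∀ k ∈ I, δ k * xstar k > 0) →
          (∀ k, xstar k ≠ 0 → k ∉ T → k ∉ I → δ k * xstar k ≤ 0) →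
          ∑ k ∈ I, |δ k| < ∑ k ∈ Tᶜ \ I, |δ k|) := by
  classical
  constructor
  · -- necessity
    intro hmin I hI δ hAδ hnorm hpos _hneg
    have hδabs_le : ∀ k, |δ k| ≤ 1 := by
      intro k
      calc |δ k| ≤ ∑ j, |δ j| :=
            Finset.single_le_sum (f := fun j => |δ j|) (fun j _ => abs_nonneg _) (mem_univ k)
        _ = 1 := hnorm
    set s : Finset ℝ := insert 1 (I.image fun k => |xstar k|) with hs
    have hsne : s.Nonempty := insert_nonempty _ _
    set t := s.min' hsne with htdef
    have ht_pos : 0 < t := by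
      rw [htdef]
      rw [Finset.lt_min'_iff]
      intro b hb
      rw [hs, mem_insert] at hb
      rcases hb with rfl | hb
      · norm_num
      · obtain ⟨k, hk, rfl⟩ := Finset.mem_image.mp hb
        exact abs_pos.mpr (hI k hk).1
    have ht_le : ∀ k ∈ I, t ≤ |xstar k| := by
      intro k hk
      exact Finset.min'_le _ _ (mem_insert_of_mem (Finset.mem_image_of_mem _ hk))
    have hδne : δ ≠ 0 := by
      intro h
      rw [h] at hnorm
      simp at hnorm
    -- the perturbed vector
    set x : Fin n → ℝ := fun k => xstar k - t * δ k with hx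
    have hAx : A.mulVec x = A.mulVec xstar := by
      have hxe : x = xstar - t • δ := by funext k; simp [hx, smul_eq_mul]
      rw [hxe, A.mulVec_sub, A.mulVec_smul, hAδ, smul_zero, sub_zero]
    have hxne : x ≠ xstar := by
      intro h
      apply hδne
      funext k
      have := congrFun h k
      simp only [hx] at this
      have : t * δ k = 0 := by linarith
      have := (mul_eq_zero.mp this).resolve_left (ne_of_gt ht_pos)
      simpa using this
    have hlt := hmin x hAx hxne
    have hITc : I ⊆ Tᶜ := fun k hk => Finset.mem_compl.mpr (hI k hk).2
    have hsplit : ∀ f : Fin n → ℝ,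
        ∑ k ∈ Tᶜ, f k = ∑ k ∈ Tᶜ \ I, f k + ∑ k ∈ I, f k :=
      fun f => (Finset.sum_sdiff hITc).symm
    have hb1 : ∑ k ∈ I, |x k| ≤ ∑ k ∈ I, (|xstar k| - t * |δ k|) := by
      apply Finset.sum_le_sum
      intro k hk
      apply abs_sub_le_of_pos_mul
      · have := hpos k hk; nlinarith
      · calc t * |δ k| ≤ t * 1 :=
              mul_le_mul_of_nonneg_left (hδabs_le k) ht_pos.le
          _ = t := mul_one t
          _ ≤ |xstar k| := ht_le k hk
    have hb2 : ∑ k ∈ Tᶜ \ I, |x k| ≤ ∑ k ∈ Tᶜ \ I, (|xstar k| + t * |δ k|) := by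
      apply Finset.sum_le_sum
      intro k _
      have h3 : |xstar k - t * δ k| ≤ |xstar k| + |t * δ k| := by
        have := abs_add_le (xstar k) (-(t * δ k))
        simpa [sub_eq_add_neg] using this
      rw [abs_mul, abs_of_pos ht_pos] at h3
      simpa [hx] using h3
    rw [hsplit (fun k => |xstar k|), hsplit (fun k => |x k|)] at hlt
    rw [Finset.sum_add_distrib] at hb2
    rw [Finset.sum_sub_distrib] at hb1
    rw [← Finset.mul_sum] at hb1 hb2
    have hfin : t * ∑ k ∈ I, |δ k| < t * ∑ k ∈ Tᶜ \ I, |δ k| := by linarith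
    exact (mul_lt_mul_iff_right₀ ht_pos).mp hfin
  · -- sufficiency
    intro hcond x hAx hne
    set δ0 : Fin n → ℝ := fun k => x k - xstar k with hδ0
    have hxk : ∀ k, x k = xstar k + δ0 k := by intro k; simp [hδ0]
    have hAδ0 : A.mulVec δ0 = 0 := by
      have hδe : δ0 = x - xstar := by funext k; simp [hδ0]
      rw [hδe, A.mulVec_sub, hAx, sub_self]
    set s : ℝ := ∑ k, |δ0 k| with hsdef
    have hs : 0 < s := by
      obtain ⟨k, hk⟩ := Function.ne_iff.mp hne
      apply Finset.sum_pos' (fun j _ => abs_nonneg _)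
      exact ⟨k, mem_univ k, abs_pos.mpr (sub_ne_zero.mpr hk)⟩
    set I : Finset (Fin n) :=
      univ.filter (fun k => xstar k ≠ 0 ∧ k ∉ T ∧ δ0 k * xstar k < 0) with hI
    have hImem : ∀ k ∈ I, xstar k ≠ 0 ∧ k ∉ T := by
      intro k hk
      rw [hI, Finset.mem_filter] at hk
      exact ⟨hk.2.1, hk.2.2.1⟩
    set δ : Fin n → ℝ := fun k => -δ0 k / s with hδ
    have habsδ : ∀ k, |δ k| = |δ0 k| / s := by
      intro k
      rw [hδ]
      rw [abs_div, abs_neg, abs_of_pos hs]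
    have hAδ : A.mulVec δ = 0 := by
      have hδe : δ = (-s⁻¹) • δ0 := by
        funext k; simp [hδ, smul_eq_mul, div_eq_mul_inv]; ring
      rw [hδe, A.mulVec_smul, hAδ0, smul_zero]
    have hnormδ : (∑ k, |δ k|) = 1 := by
      simp only [habsδ]
      rw [← Finset.sum_div, ← hsdef, div_self (ne_of_gt hs)]
    have hδx : ∀ k, δ k * xstar k = -(δ0 k * xstar k) / s := by
      intro k; rw [hδ]; ring
    have hposδ : ∀ k ∈ I, δ k * xstar k > 0 := by
      intro k hk
      rw [hI, Finset.mem_filter] at hk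
      rw [hδx]
      apply div_pos (by linarith [hk.2.2.2]) hs
    have hnegδ : ∀ k, xstar k ≠ 0 → k ∉ T → k ∉ I → δ k * xstar k ≤ 0 := by
      intro k h1 h2 h3
      rw [hI, Finset.mem_filter] at h3
      push_neg at h3
      have h4 : 0 ≤ δ0 k * xstar k := h3 (mem_univ k) h1 h2
      rw [hδx]
      apply div_nonpos_of_nonpos_of_nonneg (by linarith) hs.le
    have hkey := hcond I hImem δ hAδ hnormδ hposδ hnegδ
    simp only [habsδ] at hkey
    rw [← Finset.sum_div, ← Finset.sum_div] at hkey
    have hkey2 : ∑ k ∈ I, |δ0 k| < ∑ k ∈ Tᶜ \ I, |δ0 k| := by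
      have := mul_lt_mul_of_pos_right hkey hs
      rwa [div_mul_cancel₀ _ (ne_of_gt hs), div_mul_cancel₀ _ (ne_of_gt hs)] at this
    have hITc : I ⊆ Tᶜ := by
      intro k hk
      exact Finset.mem_compl.mpr (hImem k hk).2
    have hsplit : ∀ f : Fin n → ℝ,
        ∑ k ∈ Tᶜ, f k = ∑ k ∈ Tᶜ \ I, f k + ∑ k ∈ I, f k :=
      fun f => (Finset.sum_sdiff hITc).symm
    have hb1 : ∑ k ∈ I, (|xstar k| - |δ0 k|) ≤ ∑ k ∈ I, |x k| := by
      apply Finset.sum_le_sum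
      intro k _
      have h5 := abs_sub_abs_le_abs_sub (xstar k) (-δ0 k)
      rw [abs_neg, sub_neg_eq_add, ← hxk k] at h5
      exact h5
    have hb2 : ∑ k ∈ Tᶜ \ I, (|xstar k| + |δ0 k|) ≤ ∑ k ∈ Tᶜ \ I, |x k| := by
      apply Finset.sum_le_sum
      intro k hk
      rw [Finset.mem_sdiff, Finset.mem_compl] at hk
      have h6 : 0 ≤ xstar k * δ0 k := by
        by_cases hz : xstar k = 0
        · simp [hz]
        · have h4 : ¬ (δ0 k * xstar k < 0) := by
            intro hc
            exact hk.2 (by rw [hI, Finset.mem_filter]; exact ⟨mem_univ k, hz, hk.1, hc⟩)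
          nlinarith [not_lt.mp h4]
      rw [hxk k, abs_add_eq_of_nonneg_mul h6]
    rw [hsplit (fun k => |xstar k|), hsplit (fun k => |x k|)]
    rw [Finset.sum_add_distrib] at hb2
    rw [Finset.sum_sub_distrib] at hb1
    linarith
end

section
/- Let A ∈ ℝ^{m×n}, T ⊆ {1,...,n}, and let x*, z* ∈ ℝⁿ be two vectors with supp(x*) = supp(z*) and sign(x*_k) = sign(z*_k) for all k ∈ Tᶜ. If x* is the unique minimizer of ‖x_{Tᶜ}‖₁ subject to Ax = A x*, then z* is the unique minimizer of ‖x_{Tᶜ}‖₁ subject to Ax = A z*. -/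
/-- Remark 1: recoverability depends only on the support and the sign
pattern on Tᶜ. -/
theorem stmt_7 {m n : ℕ} (A : Matrix (Fin m) (Fin n) ℝ) (T : Finset (Fin n))
    (xstar zstar : Fin n → ℝ)
    (hsupp : ∀ k, xstar k = 0 ↔ zstar k = 0)
    (hsign : ∀ k ∈ Tᶜ, Real.sign (xstar k) = Real.sign (zstar k))
    (hmin : ∀ x : Fin n → ℝ, A.mulVec x = A.mulVec xstar → x ≠ xstar →
      ∑ k ∈ Tᶜ, |xstar k| < ∑ k ∈ Tᶜ, |x k|) :
    ∀ x : Fin n → ℝ, A.mulVec x = A.mulVec zstar → x ≠ zstar →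
      ∑ k ∈ Tᶜ, |zstar k| < ∑ k ∈ Tᶜ, |x k| := by
  intro x hAx hne
  by_contra hcon
  push_neg at hcon
  -- direction h
  set h : Fin n → ℝ := x - zstar with hhdef
  have hAh : A.mulVec h = 0 := by
    rw [hhdef, Matrix.mulVec_sub, hAx, sub_self]
  obtain ⟨k0, hk0⟩ : ∃ k, h k ≠ 0 := by
    by_contra hall
    push_neg at hall
    apply hne
    funext k
    have := hall k
    simp only [hhdef, Pi.sub_apply, sub_eq_zero] at this
    exact this
  -- choose epsilon
  set S : Finset (Fin n) := Tᶜ.filter (fun k => xstar k ≠ 0) with hSdef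
  set f : Fin n → ℝ := fun k => |xstar k| / (|h k| + 1) with hfdef
  set ε : ℝ := if hS : S.Nonempty then min 1 (S.inf' hS f) else 1 with hεdef
  have hεpos : 0 < ε := by
    rw [hεdef]
    split_ifs with hS
    · apply lt_min one_pos
      rw [Finset.lt_inf'_iff]
      intro k hk
      have hx0 : xstar k ≠ 0 := (Finset.mem_filter.mp hk).2
      exact div_pos (abs_pos.mpr hx0) (by positivity)
    · exact one_pos
  have hεsmall : ∀ k ∈ S, ε * |h k| < |xstar k| := by
    intro k hk
    have hεle : ε ≤ f k := by
      rw [hεdef]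
      rw [dif_pos ⟨k, hk⟩]
      exact le_trans (min_le_right _ _) (Finset.inf'_le f hk)
    have h1 : 0 < |h k| + 1 := by positivity
    have h2 : ε * (|h k| + 1) ≤ |xstar k| := by
      rw [hfdef] at hεle
      calc ε * (|h k| + 1) ≤ f k * (|h k| + 1) := by
            apply mul_le_mul_of_nonneg_right hεle h1.le
        _ = |xstar k| := by simp only [hfdef]; field_simp [h1.ne']
    nlinarith
  -- key pointwise bound on Tᶜ
  have hkey : ∀ k ∈ Tᶜ, |xstar k + ε * h k| ≤ |xstar k| + ε * (|x k| - |zstar k|) := by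
    intro k hk
    have hhk : h k = x k - zstar k := rfl
    rcases lt_trichotomy (zstar k) 0 with hz | hz | hz
    · -- zstar k < 0, so xstar k < 0
      have hsx : Real.sign (xstar k) = -1 := by
        rw [hsign k hk, Real.sign_of_neg hz]
      have hxneg : xstar k < 0 := by
        rcases lt_trichotomy (xstar k) 0 with h' | h' | h'
        · exact h'
        · rw [h', Real.sign_zero] at hsx; norm_num at hsx
        · rw [Real.sign_of_pos h'] at hsx; norm_num at hsx
      have hmemS : k ∈ S := Finset.mem_filter.mpr ⟨hk, hxneg.ne⟩
      have hsm := hεsmall k hmemS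
      rw [abs_of_neg hxneg] at hsm
      have hlt : xstar k + ε * h k < 0 := by
        have : ε * h k ≤ ε * |h k| := by
          apply mul_le_mul_of_nonneg_left (le_abs_self _) hεpos.le
        linarith
      rw [abs_of_neg hlt, abs_of_neg hz, abs_of_neg hxneg, hhk]
      nlinarith [mul_le_mul_of_nonneg_left (neg_abs_le (x k)) hεpos.le]
    · -- zstar k = 0, xstar k = 0
      have hx0 : xstar k = 0 := (hsupp k).mpr hz
      rw [hx0, hhk, hz]
      simp [abs_mul, abs_of_pos hεpos]
    · -- zstar k > 0, xstar k > 0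
      have hsx : Real.sign (xstar k) = 1 := by
        rw [hsign k hk, Real.sign_of_pos hz]
      have hxpos : 0 < xstar k := by
        rcases lt_trichotomy (xstar k) 0 with h' | h' | h'
        · rw [Real.sign_of_neg h'] at hsx; norm_num at hsx
        · rw [h', Real.sign_zero] at hsx; norm_num at hsx
        · exact h'
      have hmemS : k ∈ S := Finset.mem_filter.mpr ⟨hk, hxpos.ne'⟩
      have hsm := hεsmall k hmemS
      rw [abs_of_pos hxpos] at hsm
      have hlt : 0 < xstar k + ε * h k := by
        have : ε * (-|h k|) ≤ ε * h k := by
          apply mul_le_mul_of_nonneg_left (neg_abs_le _) hεpos.le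
        nlinarith
      rw [abs_of_pos hlt, abs_of_pos hxpos, abs_of_pos hz, hhk]
      nlinarith [mul_le_mul_of_nonneg_left (le_abs_self (x k)) hεpos.le]
  -- the perturbed point
  set x' : Fin n → ℝ := fun k => xstar k + ε * h k with hx'def
  have hAx' : A.mulVec x' = A.mulVec xstar := by
    have : x' = xstar + ε • h := by
      funext k; simp [hx'def, smul_eq_mul]
    rw [this, Matrix.mulVec_add, Matrix.mulVec_smul, hAh]
    simp
  have hne' : x' ≠ xstar := by
    intro heq
    have := congrFun heq k0
    simp only [hx'def] at this
    have : ε * h k0 = 0 := by linarith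
    rcases mul_eq_zero.mp this with h' | h'
    · exact hεpos.ne' h'
    · exact hk0 h'
  have hlt := hmin x' hAx' hne'
  have hsum : ∑ k ∈ Tᶜ, |x' k| ≤ ∑ k ∈ Tᶜ, |xstar k| := by
    calc ∑ k ∈ Tᶜ, |x' k| ≤ ∑ k ∈ Tᶜ, (|xstar k| + ε * (|x k| - |zstar k|)) :=
          Finset.sum_le_sum hkey
      _ = ∑ k ∈ Tᶜ, |xstar k| + ε * (∑ k ∈ Tᶜ, |x k| - ∑ k ∈ Tᶜ, |zstar k|) := by
          rw [Finset.sum_add_distrib, ← Finset.mul_sum, Finset.sum_sub_distrib]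
      _ ≤ ∑ k ∈ Tᶜ, |xstar k| := by nlinarith
  linarith
end

section
/- Let A ∈ ℝ^{m×n} and x* ∈ ℝⁿ with support N. If x* is the unique minimizer of ‖x_{Tᶜ}‖₁ subject to Ax = A x* for T = ∅ (i.e., x* is exactly recovered by basis pursuit min ‖x‖₁ s.t. Ax = A x*), then for every δ ≠ 0 in the null space of A, ∑_{k ∉ N} |δ_k| + ∑_{k ∈ N : δ_k x*_k ≤ 0} |δ_k| > ∑_{k ∈ N : δ_k x*_k > 0} |δ_k|. -/
open Classical in
/-- specialization of Theorem 1 to T = ∅ (basis pursuit). -/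
theorem stmt_13 {m n : ℕ} (A : Matrix (Fin m) (Fin n) ℝ) (xstar : Fin n → ℝ)
    (hmin : ∀ x : Fin n → ℝ, A.mulVec x = A.mulVec xstar → x ≠ xstar →
      ∑ k, |xstar k| < ∑ k, |x k|)
    (δ : Fin n → ℝ) (hδ : A.mulVec δ = 0) (hδne : δ ≠ 0) :
    ∑ k ∈ Finset.univ.filter (fun k => xstar k = 0), |δ k|
      + ∑ k ∈ Finset.univ.filter (fun k => xstar k ≠ 0 ∧ δ k * xstar k ≤ 0), |δ k|
      > ∑ k ∈ Finset.univ.filter (fun k => xstar k ≠ 0 ∧ δ k * xstar k > 0), |δ k| := by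
  classical
  -- choose a small t > 0
  obtain ⟨t, ht0, htk⟩ : ∃ t : ℝ, 0 < t ∧ ∀ k, xstar k ≠ 0 → t * |δ k| < |xstar k| := by
    by_cases hSne : (Finset.univ.filter (fun k => xstar k ≠ 0)).Nonempty
    · set S := Finset.univ.filter (fun k => xstar k ≠ 0) with hSdef
      set t := S.inf' hSne (fun k => |xstar k| / (|δ k| + 1)) with htdef
      have ht0 : 0 < t := by
        rw [htdef, Finset.lt_inf'_iff]
        intro k hk
        have hx : xstar k ≠ 0 := (Finset.mem_filter.mp hk).2
        have hx' : 0 < |xstar k| := abs_pos.mpr hx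
        have : (0:ℝ) < |δ k| + 1 := by positivity
        positivity
      refine ⟨t, ht0, ?_⟩
      intro k hk
      have hkS : k ∈ S := Finset.mem_filter.mpr ⟨Finset.mem_univ k, hk⟩
      have h1 : t ≤ |xstar k| / (|δ k| + 1) :=
        Finset.inf'_le (fun k => |xstar k| / (|δ k| + 1)) hkS
      have hx : 0 < |xstar k| := abs_pos.mpr hk
      have hd : 0 ≤ |δ k| := abs_nonneg _
      have hpos : (0:ℝ) < |δ k| + 1 := by linarith
      have h2 : t * (|δ k| + 1) ≤ |xstar k| := (le_div_iff₀ hpos).mp h1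
      nlinarith
    · exact ⟨1, one_pos, fun k hk => absurd (Finset.mem_filter.mpr ⟨Finset.mem_univ k, hk⟩)
        (fun h => hSne ⟨k, h⟩)⟩
  set x : Fin n → ℝ := fun k => xstar k - t * δ k with hxdef
  have hAx : A.mulVec x = A.mulVec xstar := by
    have hx' : x = xstar - t • δ := by funext k; simp [hxdef, smul_eq_mul]
    rw [hx', Matrix.mulVec_sub, Matrix.mulVec_smul, hδ, smul_zero, sub_zero]
  have hne : x ≠ xstar := by
    intro h
    apply hδne
    funext k
    have h2 : xstar k - t * δ k = xstar k := congrFun h k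
    have h3 : t * δ k = 0 := by linarith
    have : δ k = 0 := by
      rcases mul_eq_zero.mp h3 with h4 | h4
      · exact absurd h4 (ne_of_gt ht0)
      · exact h4
    simpa using this
  have key := hmin x hAx hne
  -- partition lemma
  have hsplit : ∀ h : Fin n → ℝ, ∑ k, h k =
      ∑ k ∈ Finset.univ.filter (fun k => xstar k = 0), h k
      + ∑ k ∈ Finset.univ.filter (fun k => xstar k ≠ 0 ∧ δ k * xstar k > 0), h k
      + ∑ k ∈ Finset.univ.filter (fun k => xstar k ≠ 0 ∧ δ k * xstar k ≤ 0), h k := by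
    intro h
    have hfP : Finset.univ.filter (fun k => ¬ xstar k = 0 ∧ δ k * xstar k > 0)
        = Finset.univ.filter (fun k => xstar k ≠ 0 ∧ δ k * xstar k > 0) := by
      apply Finset.filter_congr; intro k _; simp
    have hfQ : Finset.univ.filter (fun k => ¬ xstar k = 0 ∧ ¬ δ k * xstar k > 0)
        = Finset.univ.filter (fun k => xstar k ≠ 0 ∧ δ k * xstar k ≤ 0) := by
      apply Finset.filter_congr; intro k _; simp [not_lt]
    rw [← Finset.sum_filter_add_sum_filter_not Finset.univ (fun k => xstar k = 0) h,
      ← Finset.sum_filter_add_sum_filter_not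
        (Finset.univ.filter (fun k => ¬ xstar k = 0)) (fun k => δ k * xstar k > 0) h,
      Finset.filter_filter, Finset.filter_filter, hfP, hfQ, add_assoc]
  -- pointwise values
  have hZ : ∀ k ∈ Finset.univ.filter (fun k => xstar k = 0), |x k| = t * |δ k| := by
    intro k hk
    have h0 : xstar k = 0 := (Finset.mem_filter.mp hk).2
    simp [hxdef, h0, abs_mul, abs_of_pos ht0]
  have hP : ∀ k ∈ Finset.univ.filter (fun k => xstar k ≠ 0 ∧ δ k * xstar k > 0),
      |x k| = |xstar k| - t * |δ k| := by
    intro k hk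
    obtain ⟨hx0, hprod⟩ := (Finset.mem_filter.mp hk).2
    have hb := htk k hx0
    rcases hx0.lt_or_gt with hxneg | hxpos
    · have hδk : δ k < 0 := by nlinarith
      have hb' : t * (-δ k) < -xstar k := by
        rwa [abs_of_neg hδk, abs_of_neg hxneg] at hb
      have hxk : xstar k - t * δ k < 0 := by linarith
      rw [show x k = xstar k - t * δ k from rfl, abs_of_neg hxk, abs_of_neg hxneg,
        abs_of_neg hδk]
      ring
    · have hδk : 0 < δ k := by nlinarith
      have hb' : t * δ k < xstar k := by
        rwa [abs_of_pos hδk, abs_of_pos hxpos] at hb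
      have hxk : 0 < xstar k - t * δ k := by linarith
      rw [show x k = xstar k - t * δ k from rfl, abs_of_pos hxk, abs_of_pos hxpos,
        abs_of_pos hδk]
  have hQ : ∀ k ∈ Finset.univ.filter (fun k => xstar k ≠ 0 ∧ δ k * xstar k ≤ 0),
      |x k| = |xstar k| + t * |δ k| := by
    intro k hk
    obtain ⟨hx0, hprod⟩ := (Finset.mem_filter.mp hk).2
    rcases hx0.lt_or_gt with hxneg | hxpos
    · have hδk : 0 ≤ δ k := by nlinarith
      have hxk : xstar k - t * δ k < 0 := by nlinarith
      rw [show x k = xstar k - t * δ k from rfl, abs_of_neg hxk, abs_of_neg hxneg,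
        abs_of_nonneg hδk]
      ring
    · have hδk : δ k ≤ 0 := by nlinarith
      have hxk : 0 < xstar k - t * δ k := by nlinarith
      rw [show x k = xstar k - t * δ k from rfl, abs_of_pos hxk, abs_of_pos hxpos,
        abs_of_nonpos hδk]
      ring
  rw [hsplit (fun k => |xstar k|), hsplit (fun k => |x k|)] at key
  rw [Finset.sum_congr rfl hZ, Finset.sum_congr rfl hP, Finset.sum_congr rfl hQ] at key
  have e1 : ∑ k ∈ Finset.univ.filter (fun k => xstar k = 0), |xstar k| = 0 := by
    apply Finset.sum_eq_zero
    intro k hk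
    simp [(Finset.mem_filter.mp hk).2]
  rw [e1, Finset.sum_sub_distrib, Finset.sum_add_distrib, ← Finset.mul_sum,
    ← Finset.mul_sum, ← Finset.mul_sum] at key
  set dZ := ∑ k ∈ Finset.univ.filter (fun k => xstar k = 0), |δ k| with hdZ
  set dP := ∑ k ∈ Finset.univ.filter (fun k => xstar k ≠ 0 ∧ δ k * xstar k > 0), |δ k| with hdP
  set dQ := ∑ k ∈ Finset.univ.filter (fun k => xstar k ≠ 0 ∧ δ k * xstar k ≤ 0), |δ k| with hdQ
  have h3 : 0 < t * (dZ + dQ - dP) := by nlinarith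
  have h4 : 0 < dZ + dQ - dP := by
    by_contra hcon
    push_neg at hcon
    nlinarith
  linarith
end
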